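/- Let M ∈ 𝒮^n be symmetric with M_{11} = M_{12} = M_{22} = 1. If x is a strict local minimizer of min{y^T M y : y ∈ Δ_n}, then x_1 x_2 = 0. -/

import Mathlib

open Matrix Finset
open scoped Classical

def IsStable {n : ℕ} (G : SimpleGraph (Fin n)) (S : Finset (Fin n)) : Prop :=
  ∀ i ∈ S, ∀ j ∈ S, ¬ G.Adj i j

noncomputable def alpha {n : ℕ} (G : SimpleGraph (Fin n)) : ℕ :=
  sSup {k | ∃ S : Finset (Fin n), IsStable G S ∧ S.card = k}

noncomputable def indic {n : ℕ} (S : Finset (Fin n)) : Fin n → ℝ :=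
  fun i => if i ∈ S then 1 else 0

noncomputable def qform {n : ℕ} (M : Matrix (Fin n) (Fin n) ℝ) (x : Fin n → ℝ) : ℝ :=
  x ⬝ᵥ M.mulVec x

noncomputable def fG {n : ℕ} (G : SimpleGraph (Fin n)) (x : Fin n → ℝ) : ℝ :=
  qform (1 + G.adjMatrix ℝ) x

noncomputable def globMin {n : ℕ} (f : (Fin n → ℝ) → ℝ) : Set (Fin n → ℝ) :=
  {x | x ∈ stdSimplex ℝ (Fin n) ∧ ∀ y ∈ stdSimplex ℝ (Fin n), f x ≤ f y}

theorem stmt_3 (n : ℕ) (M : Matrix (Fin (n+2)) (Fin (n+2)) ℝ) (hM : M.IsSymm)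
    (h11 : M 0 0 = 1) (h12 : M 0 1 = 1) (h22 : M 1 1 = 1)
    (x : Fin (n+2) → ℝ) (hx : x ∈ stdSimplex ℝ (Fin (n+2)))
    (hstrict : ∃ ε > 0, ∀ y ∈ stdSimplex ℝ (Fin (n+2)), y ≠ x → dist y x < ε →
      qform M x < qform M y) :
    x 0 * x 1 = 0 := by
  by_contra hcon
  obtain ⟨hx0, hxsum⟩ := hx
  have h0 : 0 < x 0 := lt_of_le_of_ne (hx0 0) (fun h => hcon (by rw [← h]; ring))
  have h1 : 0 < x 1 := lt_of_le_of_ne (hx0 1) (fun h => hcon (by rw [← h]; ring))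
  obtain ⟨ε, hε, hmin⟩ := hstrict
  have h01 : (0 : Fin (n+2)) ≠ 1 := by
    simp [Fin.ext_iff]
  set v : Fin (n+2) → ℝ := Pi.single 0 1 - Pi.single 1 1 with hv
  set t : ℝ := min (min (x 0) (x 1)) ε / 2 with ht
  have htpos : 0 < t := by positivity
  have ht0 : t ≤ x 0 := by
    nlinarith [min_le_left (min (x 0) (x 1)) ε, min_le_left (x 0) (x 1), htpos]
  have ht1 : t ≤ x 1 := by
    nlinarith [min_le_left (min (x 0) (x 1)) ε, min_le_right (x 0) (x 1), htpos]
  have htε : t < ε := by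
    nlinarith [min_le_right (min (x 0) (x 1)) ε, htpos]
  have hvsum : ∑ i, v i = 0 := by
    simp [hv, Finset.sum_sub_distrib, Finset.sum_pi_single]
  have hvabs : ∀ i, |v i| ≤ 1 := by
    intro i
    simp only [hv, Pi.sub_apply, Pi.single_apply]
    rcases eq_or_ne i 0 with h | h
    · subst h; simp [h01]
    · rcases eq_or_ne i 1 with h' | h'
      · subst h'; simp [h]
      · simp [h, h']
  have hmem : ∀ s : ℝ, |s| ≤ t → x + s • v ∈ stdSimplex ℝ (Fin (n+2)) := by
    intro s hs
    have hs1 : -t ≤ s := neg_le_of_abs_le hs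
    have hs2 : s ≤ t := le_of_abs_le hs
    constructor
    · intro i
      simp only [Pi.add_apply, Pi.smul_apply, smul_eq_mul, hv, Pi.sub_apply, Pi.single_apply]
      rcases eq_or_ne i 0 with h | h
      · subst h; simp [h01]; linarith [hx0 0]
      · rcases eq_or_ne i 1 with h' | h'
        · subst h'; simp [h]; linarith [hx0 1]
        · simp [h, h']; exact hx0 i
    · simp only [Pi.add_apply, Pi.smul_apply, smul_eq_mul, Finset.sum_add_distrib,
        ← Finset.mul_sum, hvsum, hxsum]
      ring
  have hdist : ∀ s : ℝ, |s| ≤ t → dist (x + s • v) x < ε := by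
    intro s hs
    rw [dist_pi_lt_iff hε]
    intro i
    simp only [Pi.add_apply, Pi.smul_apply, smul_eq_mul, Real.dist_eq, add_sub_cancel_left]
    calc |s * v i| = |s| * |v i| := abs_mul _ _
      _ ≤ t * 1 := mul_le_mul hs (hvabs i) (abs_nonneg _) (le_of_lt htpos)
      _ < ε := by linarith
  have hne : ∀ s : ℝ, s ≠ 0 → x + s • v ≠ x := by
    intro s hs h
    have := congrFun h 0
    simp [hv, Pi.single_apply, h01] at this
    exact hs this
  have hqv : v ⬝ᵥ M.mulVec v = 0 := by
    have h21 : M 1 0 = 1 := by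
      have h := hM; rw [Matrix.IsSymm] at h
      calc M 1 0 = Mᵀ 0 1 := rfl
        _ = M 0 1 := by rw [h]
        _ = 1 := h12
    simp [hv, Matrix.mulVec_sub, Matrix.mulVec_single, sub_dotProduct,
      h11, h12, h22, h21]
  have key : qform M (x + t • v) + qform M (x + (-t) • v) = 2 * qform M x := by
    simp only [qform, Matrix.mulVec_add, Matrix.mulVec_smul, dotProduct_add,
      add_dotProduct, smul_dotProduct, dotProduct_smul, smul_eq_mul, hqv]
    ring
  have ha := hmin _ (hmem t (by rw [abs_of_pos htpos])) (hne t (ne_of_gt htpos))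
    (hdist t (by rw [abs_of_pos htpos]))
  have hb := hmin _ (hmem (-t) (by rw [abs_neg, abs_of_pos htpos])) (hne (-t) (by linarith))
    (hdist (-t) (by rw [abs_neg, abs_of_pos htpos]))
  linarith
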